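/- arXiv:2107.02747 — 2 statements merged into one kernel-verified Lean document; each statement's English description precedes it below -/
import Mathlib

section
/- For the one-soliton solution u(x,t) = α e^{iφ} e^{i(α²-β²)t + iεβx} / cosh(α(x - x₀ - 2εβt)), the time-dependent boundary condition i u_t(0,t) = (α² + β²) u(0,t) − 2|u(0,t)|² u(0,t) − 2 sign(x₀ + 2εβt) · u_x(0,t) √(α² − |u(0,t)|²) holds for all t with x₀ + 2εβt ≠ 0. -/
lemma aux_hasDerivAt (A c d p q : ℂ) (t : ℝ)
    (h : Complex.cosh (p * (t : ℂ) + q) ≠ 0) :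
    HasDerivAt (fun s : ℝ => A * Complex.exp (c * (s : ℂ) + d) / Complex.cosh (p * (s : ℂ) + q))
      ((A * Complex.exp (c * (t : ℂ) + d) * c * Complex.cosh (p * (t : ℂ) + q)
        - A * Complex.exp (c * (t : ℂ) + d) * (Complex.sinh (p * (t : ℂ) + q) * p))
        / Complex.cosh (p * (t : ℂ) + q) ^ 2) t := by
  have hC : HasDerivAt (fun w : ℂ => A * Complex.exp (c * w + d) / Complex.cosh (p * w + q))
      ((A * Complex.exp (c * (t : ℂ) + d) * c * Complex.cosh (p * (t : ℂ) + q)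
        - A * Complex.exp (c * (t : ℂ) + d) * (Complex.sinh (p * (t : ℂ) + q) * p))
        / Complex.cosh (p * (t : ℂ) + q) ^ 2) (t : ℂ) := by
    have hid : HasDerivAt (fun w : ℂ => w) 1 (t : ℂ) := hasDerivAt_id _
    have hnum : HasDerivAt (fun w : ℂ => A * Complex.exp (c * w + d))
        (A * Complex.exp (c * (t : ℂ) + d) * c) (t : ℂ) := by
      have := (((hid.const_mul c).add_const d).cexp).const_mul A
      refine this.congr_deriv ?_
      ring
    have hden : HasDerivAt (fun w : ℂ => Complex.cosh (p * w + q))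
        (Complex.sinh (p * (t : ℂ) + q) * p) (t : ℂ) := by
      have := ((hid.const_mul p).add_const q).ccosh
      convert this using 1
      ring
    exact hnum.div hden h
  exact hC.comp_ofReal

/-- The one-soliton solution satisfies the time-dependent boundary condition
`i u_t(0,t) = (α²+β²)u(0,t) − 2|u(0,t)|²u(0,t)
  − 2 sign(x₀+2εβt) u_x(0,t) √(α² − |u(0,t)|²)`
for all `t` with `x₀ + 2εβt ≠ 0`. -/
theorem one_soliton_time_dependent_BC (α β φ x₀ ε : ℝ) (hα : 0 < α) (hβ : 0 < β)
    (hε : ε = 1 ∨ ε = -1) (u : ℝ → ℝ → ℂ)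
    (hu : ∀ x t : ℝ, u x t =
      (α : ℂ) * Complex.exp (Complex.I * (φ : ℂ)) *
        Complex.exp (Complex.I * (((α : ℂ) ^ 2 - (β : ℂ) ^ 2) * (t : ℂ)) +
          Complex.I * (ε : ℂ) * (β : ℂ) * (x : ℂ)) /
        Complex.cosh ((α : ℂ) * ((x : ℂ) - (x₀ : ℂ) - 2 * (ε : ℂ) * (β : ℂ) * (t : ℂ)))) :
    ∀ t : ℝ, x₀ + 2 * ε * β * t ≠ 0 →
      Complex.I * deriv (fun s : ℝ => u 0 s) t =
        ((α : ℂ) ^ 2 + (β : ℂ) ^ 2) * u 0 t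
          - 2 * (((‖u 0 t‖ : ℝ) : ℂ)) ^ 2 * u 0 t
          - 2 * ((Real.sign (x₀ + 2 * ε * β * t) : ℝ) : ℂ) *
              deriv (fun y : ℝ => u y t) 0 *
              ((Real.sqrt (α ^ 2 - ‖u 0 t‖ ^ 2) : ℝ) : ℂ) := by
  intro t hst
  set s : ℝ := x₀ + 2 * ε * β * t with hs_def
  set ch : ℝ := Real.cosh (α * s) with hch_def
  set sh : ℝ := Real.sinh (α * s) with hsh_def
  have hch_pos : 0 < ch := Real.cosh_pos _
  have hchC : ((ch : ℂ)) ≠ 0 := by exact_mod_cast hch_pos.ne'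
  have hargC : ∀ r : ℝ, Complex.cosh (r : ℂ) = ((Real.cosh r : ℝ) : ℂ) := fun r =>
    (Complex.ofReal_cosh r).symm
  set A : ℂ := (α : ℂ) * Complex.exp (Complex.I * (φ : ℂ)) with hA_def
  set W : ℂ := Complex.exp (Complex.I * (((α : ℂ) ^ 2 - (β : ℂ) ^ 2) * (t : ℂ))) with hW_def
  -- value of u 0 t
  have hu0 : u 0 t = A * W / (ch : ℂ) := by
    rw [hu]
    have h1 : Complex.I * (((α : ℂ) ^ 2 - (β : ℂ) ^ 2) * (t : ℂ)) +
        Complex.I * (ε : ℂ) * (β : ℂ) * ((0 : ℝ) : ℂ)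
        = Complex.I * (((α : ℂ) ^ 2 - (β : ℂ) ^ 2) * (t : ℂ)) := by push_cast; ring
    have h2 : (α : ℂ) * (((0 : ℝ) : ℂ) - (x₀ : ℂ) - 2 * (ε : ℂ) * (β : ℂ) * (t : ℂ))
        = ((-(α * s) : ℝ) : ℂ) := by push_cast [hs_def]; ring
    rw [h1, h2, hargC, Real.cosh_neg, ← hch_def]
  -- |u 0 t|
  have habs_exp : ∀ r : ℝ, ‖Complex.exp (Complex.I * (r : ℂ))‖ = 1 := by
    intro r
    rw [mul_comm]
    exact Complex.norm_exp_ofReal_mul_I r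
  have habs : ‖u 0 t‖ = α / ch := by
    have hW' : W = Complex.exp (Complex.I * (((α ^ 2 - β ^ 2) * t : ℝ) : ℂ)) := by
      rw [hW_def]; congr 1; push_cast; ring
    rw [hu0, hA_def, hW']
    rw [norm_div, norm_mul, norm_mul, habs_exp, habs_exp, Complex.norm_real,
      Complex.norm_real, Real.norm_eq_abs, Real.norm_eq_abs, abs_of_pos hα, abs_of_pos hch_pos]
    ring
  -- sqrt fact
  have hsqrt : Real.sqrt (α ^ 2 - (α / ch) ^ 2) = α * |sh| / ch := by
    have hcs : ch ^ 2 = sh ^ 2 + 1 := Real.cosh_sq (α * s)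
    have h1 : α ^ 2 - (α / ch) ^ 2 = (α * |sh| / ch) ^ 2 := by
      field_simp
      rw [sq_abs]
      nlinarith [hcs]
    rw [h1, Real.sqrt_sq (by positivity)]
  -- sign fact
  have hsign : Real.sign s * (α * |sh| / ch) = α * sh / ch := by
    rcases lt_or_gt_of_ne hst with h | h
    · rw [Real.sign_of_neg h]
      have hsh_neg : sh < 0 := by
        rw [hsh_def]
        exact Real.sinh_neg_iff.mpr (by nlinarith)
      rw [abs_of_neg hsh_neg]; ring
    · rw [Real.sign_of_pos h]
      have hsh_pos : 0 < sh := by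
        rw [hsh_def]
        exact Real.sinh_pos_iff.mpr (by nlinarith)
      rw [abs_of_pos hsh_pos]; ring
  have hkey : ((Real.sign s : ℝ) : ℂ) * ((α * |sh| / ch : ℝ) : ℂ)
      = (α : ℂ) * (sh : ℂ) / (ch : ℂ) := by
    rw [← Complex.ofReal_mul, hsign]; push_cast; ring
  have hCS : ((ch : ℂ)) ^ 2 = (sh : ℂ) ^ 2 + 1 := by
    exact_mod_cast congrArg (fun r : ℝ => (r : ℂ)) (Real.cosh_sq (α * s))
  -- time derivative
  have hdT : deriv (fun s' : ℝ => u 0 s') t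
      = (A * W * (Complex.I * ((α : ℂ) ^ 2 - (β : ℂ) ^ 2)) * (ch : ℂ)
        - A * W * ((-(sh : ℂ)) * (-(2 * (ε : ℂ) * (β : ℂ) * (α : ℂ))))) / (ch : ℂ) ^ 2 := by
    have hfun : (fun s' : ℝ => u 0 s')
        = fun s' : ℝ => A * Complex.exp ((Complex.I * ((α : ℂ) ^ 2 - (β : ℂ) ^ 2)) * (s' : ℂ) + 0)
            / Complex.cosh ((-(2 * (ε : ℂ) * (β : ℂ) * (α : ℂ))) * (s' : ℂ) + (-((α : ℂ) * (x₀ : ℂ)))) := by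
      funext s'
      rw [hu]
      have h1 : Complex.I * (((α : ℂ) ^ 2 - (β : ℂ) ^ 2) * (s' : ℂ)) +
          Complex.I * (ε : ℂ) * (β : ℂ) * ((0 : ℝ) : ℂ)
          = (Complex.I * ((α : ℂ) ^ 2 - (β : ℂ) ^ 2)) * (s' : ℂ) + 0 := by push_cast; ring
      have h2 : (α : ℂ) * (((0 : ℝ) : ℂ) - (x₀ : ℂ) - 2 * (ε : ℂ) * (β : ℂ) * (s' : ℂ))
          = (-(2 * (ε : ℂ) * (β : ℂ) * (α : ℂ))) * (s' : ℂ) + (-((α : ℂ) * (x₀ : ℂ))) := by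
        push_cast; ring
      rw [h1, h2]
    have harg : (-(2 * (ε : ℂ) * (β : ℂ) * (α : ℂ))) * (t : ℂ) + (-((α : ℂ) * (x₀ : ℂ)))
        = ((-(α * s) : ℝ) : ℂ) := by push_cast [hs_def]; ring
    have hne : Complex.cosh ((-(2 * (ε : ℂ) * (β : ℂ) * (α : ℂ))) * (t : ℂ)
        + (-((α : ℂ) * (x₀ : ℂ)))) ≠ 0 := by
      rw [harg, hargC, Real.cosh_neg, ← hch_def]; exact hchC
    have h := aux_hasDerivAt A (Complex.I * ((α : ℂ) ^ 2 - (β : ℂ) ^ 2)) 0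
      (-(2 * (ε : ℂ) * (β : ℂ) * (α : ℂ))) (-((α : ℂ) * (x₀ : ℂ))) t hne
    rw [hfun, h.deriv, harg, hargC, ← Complex.ofReal_sinh, Real.sinh_neg, Real.cosh_neg,
      ← hch_def, ← hsh_def]
    have hWe : Complex.exp (Complex.I * ((α : ℂ) ^ 2 - (β : ℂ) ^ 2) * (t : ℂ) + 0) = W := by
      rw [hW_def]; congr 1; ring
    rw [hWe]
    push_cast
    ring
  -- space derivative
  have hdX : deriv (fun y : ℝ => u y t) 0
      = (A * W * (Complex.I * (ε : ℂ) * (β : ℂ)) * (ch : ℂ)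
        - A * W * ((-(sh : ℂ)) * (α : ℂ))) / (ch : ℂ) ^ 2 := by
    have hfun : (fun y : ℝ => u y t)
        = fun y : ℝ => A * Complex.exp ((Complex.I * (ε : ℂ) * (β : ℂ)) * (y : ℂ)
              + Complex.I * (((α : ℂ) ^ 2 - (β : ℂ) ^ 2) * (t : ℂ)))
            / Complex.cosh ((α : ℂ) * (y : ℂ) + (-((α : ℂ) * ((x₀ : ℂ) + 2 * (ε : ℂ) * (β : ℂ) * (t : ℂ))))) := by
      funext y
      rw [hu]
      have h1 : Complex.I * (((α : ℂ) ^ 2 - (β : ℂ) ^ 2) * (t : ℂ)) +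
          Complex.I * (ε : ℂ) * (β : ℂ) * (y : ℂ)
          = (Complex.I * (ε : ℂ) * (β : ℂ)) * (y : ℂ)
              + Complex.I * (((α : ℂ) ^ 2 - (β : ℂ) ^ 2) * (t : ℂ)) := by ring
      have h2 : (α : ℂ) * ((y : ℂ) - (x₀ : ℂ) - 2 * (ε : ℂ) * (β : ℂ) * (t : ℂ))
          = (α : ℂ) * (y : ℂ) + (-((α : ℂ) * ((x₀ : ℂ) + 2 * (ε : ℂ) * (β : ℂ) * (t : ℂ)))) := by
        ring
      rw [h1, h2]
    have harg : (α : ℂ) * (((0 : ℝ) : ℂ)) + (-((α : ℂ) * ((x₀ : ℂ) + 2 * (ε : ℂ) * (β : ℂ) * (t : ℂ))))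
        = ((-(α * s) : ℝ) : ℂ) := by push_cast [hs_def]; ring
    have hne : Complex.cosh ((α : ℂ) * (((0 : ℝ) : ℂ)) + (-((α : ℂ) * ((x₀ : ℂ) + 2 * (ε : ℂ) * (β : ℂ) * (t : ℂ))))) ≠ 0 := by
      rw [harg, hargC, Real.cosh_neg, ← hch_def]; exact hchC
    have h := aux_hasDerivAt A (Complex.I * (ε : ℂ) * (β : ℂ))
      (Complex.I * (((α : ℂ) ^ 2 - (β : ℂ) ^ 2) * (t : ℂ)))
      ((α : ℂ)) (-((α : ℂ) * ((x₀ : ℂ) + 2 * (ε : ℂ) * (β : ℂ) * (t : ℂ)))) 0 hne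
    rw [hfun, h.deriv, harg, hargC, ← Complex.ofReal_sinh, Real.sinh_neg, Real.cosh_neg,
      ← hch_def, ← hsh_def]
    have hWe : Complex.exp (Complex.I * (ε : ℂ) * (β : ℂ) * (((0:ℝ) : ℂ))
        + Complex.I * (((α : ℂ) ^ 2 - (β : ℂ) ^ 2) * (t : ℂ))) = W := by
      rw [hW_def]; congr 1; push_cast; ring
    rw [hWe]
    push_cast
    ring
  -- assemble
  rw [habs, hsqrt, hdT, hdX, hu0]
  have hIsq := Complex.I_sq
  have hpull : ∀ D : ℂ, 2 * ((Real.sign s : ℝ) : ℂ) * D * ((α * |sh| / ch : ℝ) : ℂ)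
      = 2 * D * ((α : ℂ) * (sh : ℂ) / (ch : ℂ)) := by
    intro D
    rw [← hkey]
    ring
  rw [hpull]
  push_cast
  field_simp
  linear_combination (-(2 : ℂ) * (α : ℂ) ^ 2 * A * W) * hCS
    + (A * W * ((α : ℂ) ^ 2 - (β : ℂ) ^ 2) * (ch : ℂ) ^ 2) * hIsq
end

section
/- For the one-soliton solution u(x,t) = α e^{iφ} e^{i(α²-β²)t + iεβx} / cosh(α(x - x₀ - 2εβt)), the quantity I₁(t) = ∫₀^∞ |u(x,t)|² dx − sign(x₀ + 2εβt) √(α² − |u(0,t)|²) is constant in t (on each interval where x₀ + 2εβt has constant sign it equals α, and by continuity it equals α for all t). -/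
open MeasureTheory

lemma one_soliton_tanh_eq' (y : ℝ) :
    Real.sinh y / Real.cosh y = 1 - 2/(Real.exp (2*y)+1) := by
  rw [Real.sinh_eq, Real.cosh_eq, Real.exp_neg, two_mul, Real.exp_add]
  have h := Real.exp_pos y
  have h2 : (0:ℝ) < Real.exp y * Real.exp y + 1 := by positivity
  field_simp
  ring

lemma one_soliton_sech_integral (a c : ℝ) (ha : 0 < a) :
    ∫ x in Set.Ioi (0:ℝ), a^2 / Real.cosh (a*(x - c))^2
      = a + a * (Real.sinh (a*c) / Real.cosh (a*c)) := by
  have hderiv : ∀ x ∈ Set.Ici (0:ℝ),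
      HasDerivAt (fun x => a * (Real.sinh (a*(x-c)) / Real.cosh (a*(x-c))))
        (a^2 / Real.cosh (a*(x - c))^2) x := by
    intro x _
    have h1 : HasDerivAt (fun x : ℝ => a*(x-c)) a x := by
      simpa using (((hasDerivAt_id x).sub_const c).const_mul a)
    have hs := (Real.hasDerivAt_sinh (a*(x-c))).comp x h1
    have hc := (Real.hasDerivAt_cosh (a*(x-c))).comp x h1
    have hcne : Real.cosh (a*(x-c)) ≠ 0 := (Real.cosh_pos _).ne'
    have := ((hs.div hc hcne).const_mul a)
    refine this.congr_deriv ?_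
    simp only [Function.comp_apply]
    have key := Real.cosh_sq_sub_sinh_sq (a*(x-c))
    field_simp
    nlinarith [key]
  have hnn : ∀ x ∈ Set.Ioi (0:ℝ), 0 ≤ a^2 / Real.cosh (a*(x - c))^2 := by
    intro x _; positivity
  have htend : Filter.Tendsto (fun x => a * (Real.sinh (a*(x-c)) / Real.cosh (a*(x-c))))
      Filter.atTop (nhds a) := by
    have h0 : Filter.Tendsto (fun x : ℝ => 2*(a*(x-c))) Filter.atTop Filter.atTop := by
      have := (Filter.tendsto_atTop_add_const_right Filter.atTop (-c)
        (Filter.tendsto_id (α := ℝ))).const_mul_atTop (by positivity : (0:ℝ) < 2*a)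
      exact this.congr (fun x => by simp only [id_eq]; ring)
    have h1 : Filter.Tendsto (fun x : ℝ => Real.exp (2*(a*(x-c)))+1) Filter.atTop Filter.atTop :=
      Filter.tendsto_atTop_add_const_right _ 1 (Real.tendsto_exp_atTop.comp h0)
    have h2 : Filter.Tendsto (fun x : ℝ => a - a * (2/(Real.exp (2*(a*(x-c)))+1)))
        Filter.atTop (nhds (a - a * 0)) :=
      tendsto_const_nhds.sub
        (tendsto_const_nhds.mul (Filter.Tendsto.div_atTop tendsto_const_nhds h1))
    rw [mul_zero, sub_zero] at h2
    refine h2.congr fun x => ?_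
    rw [one_soliton_tanh_eq']
    ring
  have := integral_Ioi_of_hasDerivAt_of_nonneg' hderiv hnn htend
  rw [this, show a*((0:ℝ)-c) = -(a*c) by ring, Real.sinh_neg, Real.cosh_neg]
  ring

/-- The quantity `I₁(t) = ∫₀^∞ |u(x,t)|² dx − sign(x₀+2εβt) √(α² − |u(0,t)|²)`
is constant in `t` for the one-soliton solution: it equals `α` for all `t`. -/
theorem one_soliton_first_conserved_quantity (α β φ x₀ ε : ℝ) (hα : 0 < α) (hβ : 0 < β)
    (hε : ε = 1 ∨ ε = -1) (u : ℝ → ℝ → ℂ)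
    (hu : ∀ x t : ℝ, u x t =
      (α : ℂ) * Complex.exp (Complex.I * (φ : ℂ)) *
        Complex.exp (Complex.I * (((α : ℂ) ^ 2 - (β : ℂ) ^ 2) * (t : ℂ)) +
          Complex.I * (ε : ℂ) * (β : ℂ) * (x : ℂ)) /
        Complex.cosh ((α : ℂ) * ((x : ℂ) - (x₀ : ℂ) - 2 * (ε : ℂ) * (β : ℂ) * (t : ℂ)))) :
    ∀ t : ℝ,
      (∫ x in Set.Ioi (0 : ℝ), ‖u x t‖ ^ 2) -
        Real.sign (x₀ + 2 * ε * β * t) *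
          Real.sqrt (α ^ 2 - ‖u 0 t‖ ^ 2) = α := by
  intro t
  set c : ℝ := x₀ + 2 * ε * β * t with hc
  have habs : ∀ x : ℝ, ‖u x t‖ ^ 2 = α^2 / Real.cosh (α * (x - c))^2 := by
    intro x
    rw [hu]
    have h1 : (α : ℂ) * ((x : ℂ) - (x₀ : ℂ) - 2 * (ε : ℂ) * (β : ℂ) * (t : ℂ))
        = ((α * (x - c) : ℝ) : ℂ) := by rw [hc]; push_cast; ring
    rw [h1, ← Complex.ofReal_cosh]
    rw [norm_div, norm_mul, norm_mul, Complex.norm_real, Real.norm_eq_abs, Complex.norm_exp, Complex.norm_exp,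
      Complex.norm_real, Real.norm_eq_abs]
    have h2 : (Complex.I * (φ : ℂ)).re = 0 := by simp
    have h3 : (Complex.I * (((α : ℂ) ^ 2 - (β : ℂ) ^ 2) * (t : ℂ)) +
        Complex.I * (ε : ℂ) * (β : ℂ) * (x : ℂ)).re = 0 := by
      have h4 : Complex.I * (((α : ℂ) ^ 2 - (β : ℂ) ^ 2) * (t : ℂ)) +
          Complex.I * (ε : ℂ) * (β : ℂ) * (x : ℂ)
          = (((α^2 - β^2)*t + ε*β*x : ℝ) : ℂ) * Complex.I := by push_cast; ring
      rw [h4, Complex.mul_I_re, Complex.ofReal_im, neg_zero]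
    rw [h2, h3, Real.exp_zero, abs_of_pos hα, abs_of_pos (Real.cosh_pos _)]
    field_simp
  have hint : (∫ x in Set.Ioi (0 : ℝ), ‖u x t‖ ^ 2)
      = α + α * (Real.sinh (α*c) / Real.cosh (α*c)) := by
    simp only [habs]
    exact one_soliton_sech_integral α c hα
  have hcp := Real.cosh_pos (α*c)
  have h0 : ‖u 0 t‖ ^ 2 = α^2 / Real.cosh (α*c)^2 := by
    rw [habs 0, show α * ((0:ℝ) - c) = -(α*c) by ring, Real.cosh_neg]
  have hsq : α ^ 2 - ‖u 0 t‖ ^ 2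
      = (α * (Real.sinh (α*c) / Real.cosh (α*c)))^2 := by
    rw [h0]
    have key := Real.cosh_sq_sub_sinh_sq (α*c)
    field_simp
    nlinarith [key]
  have hsqrt : Real.sqrt (α ^ 2 - ‖u 0 t‖ ^ 2)
      = α * (|Real.sinh (α*c)| / Real.cosh (α*c)) := by
    rw [hsq, Real.sqrt_sq_eq_abs, abs_mul, abs_of_pos hα, abs_div,
      abs_of_pos hcp]
  rw [hint, hsqrt]
  rcases lt_trichotomy c 0 with h | h | h
  · rw [Real.sign_of_neg h]
    have hs : Real.sinh (α*c) < 0 := by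
      rw [← Real.sinh_zero]
      exact Real.sinh_lt_sinh.2 (by nlinarith)
    rw [abs_of_neg hs]
    ring
  · rw [h, Real.sign_zero, mul_zero, Real.sinh_zero]
    simp
  · rw [Real.sign_of_pos h]
    have hs : 0 < Real.sinh (α*c) := by
      rw [← Real.sinh_zero]
      exact Real.sinh_lt_sinh.2 (by nlinarith)
    rw [abs_of_pos hs]
    ring
end
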